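/- For every n ≥ 1, the subspace Ê_n is a deformation retract of Êmb(T_{Γ_n}): there are a retraction ρ : Êmb(T_{Γ_n}) → Ê_n and a homotopy H : Êmb(T_{Γ_n}) × [0,1] → Êmb(T_{Γ_n}) with H(−,1) = id and H(−,0) = ρ. In particular the completed configuration space Êmb(T_{Γ_n}) of n pairwise disjoint oriented lines in ℝ³ is homotopy equivalent to the completed space Ê_n of n oriented lines through the origin. -/

import Mathlib

open scoped RealInnerProductSpace ENNReal
open Set Filter
open Topology

noncomputable section

abbrev Pt3 := EuclideanSpace ℝ (Fin 3)

/-- The space `ℒ` of oriented lines in `ℝ³`: pairs `(v, x)` with `v` a unit direction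
vector and `x` the point of the line nearest the origin (so `⟪v, x⟫ = 0`), with the metric
induced from `S² × ℝ³`. -/
abbrev OLine := {p : Pt3 × Pt3 // ‖p.1‖ = 1 ∧ ⟪p.1, p.2⟫ = 0}

/-- The underlying set of points of an oriented line. -/
def lineSet (ℓ : OLine) : Set Pt3 := {q | ∃ t : ℝ, q = ℓ.val.2 + t • ℓ.val.1}

/-- The `x`-axis in `ℝ³`. -/
def xAxis : Set Pt3 :=
  {q | ∃ t : ℝ, q = t • (WithLp.equiv 2 (Fin 3 → ℝ)).symm ![1, 0, 0]}

/-- The (infimal) Euclidean distance between two subsets of `ℝ³`. -/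
def setDist (A B : Set Pt3) : ℝ := sInf {r : ℝ | ∃ p ∈ A, ∃ q ∈ B, r = dist p q}

/-- The distance from an oriented line to the `x`-axis. -/
def axisDist (ℓ : OLine) : ℝ := setDist (lineSet ℓ) xAxis

/-- Oriented lines disjoint from the `x`-axis (the reduced configuration space `N^re(Γ₁)`). -/
def NdisjSet : Set OLine := {ℓ | lineSet ℓ ∩ xAxis = ∅}

def pathInf {X : Type*} [EMetricSpace X] (S : Set X) (x y : X) : ℝ≥0∞ :=
  ⨅ (γ : ℝ → X) (_ : ContinuousOn γ (Set.Icc 0 1)) (_ : γ 0 = x) (_ : γ 1 = y)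
    (_ : Set.MapsTo γ (Set.Icc 0 1) S), eVariationOn γ (Set.Icc 0 1)

def dpath {X : Type*} [EMetricSpace X] (S : Set X) (x y : X) : ℝ :=
  (min (pathInf S x y) 1).toReal

structure ModelsPathMetric {α : Type*} [EMetricSpace α] (S : Set α) (X : Type*)
    [MetricSpace X] (e : X → α) : Prop where
  bij : Set.BijOn e Set.univ S
  dist_eq : ∀ a b : X, dist a b = dpath S (e a) (e b)


/-- The space of `n`-tuples of pairwise disjoint oriented lines in `ℝ³`. -/
def LinesEmb (n : ℕ) : Set (Fin n → OLine) :=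
  {g | ∀ i j : Fin n, i ≠ j → lineSet (g i) ∩ lineSet (g j) = ∅}

/-- scaling of one oriented line -/
def sigL (t : ℝ) (ℓ : OLine) : OLine :=
  ⟨(ℓ.val.1, t • ℓ.val.2), ℓ.prop.1, by rw [inner_smul_right, ℓ.prop.2, mul_zero]⟩

def sigC {n : ℕ} (t : ℝ) (g : Fin n → OLine) : Fin n → OLine := fun i => sigL t (g i)

def Mfun {n : ℕ} (g : Fin n → OLine) : ℝ := ∑ i, ‖(g i).val.2‖

lemma Mfun_nonneg {n : ℕ} (g : Fin n → OLine) : 0 ≤ Mfun g :=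
  Finset.sum_nonneg fun _ _ => norm_nonneg _

lemma Mfun_continuous {n : ℕ} : Continuous (Mfun (n := n)) := by
  refine continuous_finset_sum _ fun i _ => ?_
  exact ((continuous_subtype_val.comp (continuous_apply i)).snd).norm

lemma sigC_continuous {n : ℕ} :
    Continuous (fun p : ℝ × (Fin n → OLine) => sigC p.1 p.2) := by
  refine continuous_pi fun i => Continuous.subtype_mk ?_ _
  have h1 : Continuous (fun p : ℝ × (Fin n → OLine) => (p.2 i).val) :=
    continuous_subtype_val.comp ((continuous_apply i).comp continuous_snd)
  exact (h1.fst).prodMk (continuous_fst.smul h1.snd)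

lemma dist_oline (ℓ ℓ' : OLine) :
    dist ℓ ℓ' = max (dist ℓ.val.1 ℓ'.val.1) (dist ℓ.val.2 ℓ'.val.2) := by
  rw [Subtype.dist_eq, Prod.dist_eq]

lemma sigC_lip {n : ℕ} {t : ℝ} (ht : |t| ≤ 1) (g g' : Fin n → OLine) :
    dist (sigC t g) (sigC t g') ≤ dist g g' := by
  rw [dist_pi_le_iff dist_nonneg]
  intro i
  have h := dist_le_pi_dist g g' i
  rw [dist_oline] at h ⊢
  refine le_trans (max_le_max le_rfl ?_) h
  show dist (t • (g i).val.2) (t • (g' i).val.2) ≤ _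
  rw [dist_smul₀]
  calc ‖t‖ * dist (g i).val.2 (g' i).val.2 ≤ 1 * dist (g i).val.2 (g' i).val.2 :=
        mul_le_mul_of_nonneg_right ht dist_nonneg
    _ = _ := one_mul _

lemma sigC_dist_t {n : ℕ} (t s : ℝ) (g : Fin n → OLine) :
    dist (sigC t g) (sigC s g) ≤ |t - s| * Mfun g := by
  rw [dist_pi_le_iff (mul_nonneg (abs_nonneg _) (Mfun_nonneg g))]
  intro i
  rw [dist_oline]
  have h1 : dist ((sigC t g i).val.1) ((sigC s g i).val.1) = 0 := by
    simp [sigC, sigL]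
  rw [h1]
  have h2 : dist ((sigC t g i).val.2) ((sigC s g i).val.2) = |t - s| * ‖(g i).val.2‖ := by
    show dist (t • (g i).val.2) (s • (g i).val.2) = _
    rw [dist_eq_norm, ← sub_smul, norm_smul, Real.norm_eq_abs]
  rw [h2]
  refine max_le (mul_nonneg (abs_nonneg _) (Mfun_nonneg g)) ?_
  exact mul_le_mul_of_nonneg_left
    (Finset.single_le_sum (f := fun i => ‖(g i).val.2‖) (fun _ _ => norm_nonneg _)
      (Finset.mem_univ i)) (abs_nonneg _)

lemma sigC_mem_LinesEmb {n : ℕ} {t : ℝ} (ht : t ≠ 0) {g : Fin n → OLine}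
    (hg : g ∈ LinesEmb n) : sigC t g ∈ LinesEmb n := by
  intro i j hij
  rw [Set.eq_empty_iff_forall_notMem]
  rintro q ⟨⟨a, ha⟩, ⟨b, hb⟩⟩
  have key : ∀ (ℓ : OLine) (c : ℝ), q = (sigL t ℓ).val.2 + c • (sigL t ℓ).val.1 →
      t⁻¹ • q ∈ lineSet ℓ := by
    rintro ℓ c rfl
    refine ⟨t⁻¹ * c, ?_⟩
    show t⁻¹ • (t • ℓ.val.2 + c • ℓ.val.1) = _
    rw [smul_add, smul_smul, smul_smul, inv_mul_cancel₀ ht, one_smul]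
  have h := hg i j hij
  rw [Set.eq_empty_iff_forall_notMem] at h
  exact h (t⁻¹ • q) ⟨key (g i) a ha, key (g j) b hb⟩

lemma sigC_one {n : ℕ} (g : Fin n → OLine) : sigC 1 g = g := by
  funext i; exact Subtype.ext (Prod.ext rfl (one_smul ℝ _))

/-- generic: pathInf is at most the variation of any admissible path -/
lemma pathInf_le {α : Type*} [EMetricSpace α] {S : Set α} {x y : α} (γ : ℝ → α)
    (h1 : ContinuousOn γ (Set.Icc 0 1)) (h2 : γ 0 = x) (h3 : γ 1 = y)
    (h4 : Set.MapsTo γ (Set.Icc 0 1) S) :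
    pathInf S x y ≤ eVariationOn γ (Set.Icc 0 1) :=
  iInf_le_of_le γ (iInf_le_of_le h1 (iInf_le_of_le h2 (iInf_le_of_le h3 (iInf_le _ h4))))

lemma dpath_le_of_pathInf_le {α : Type*} [EMetricSpace α] {S : Set α} {x y : α} {r : ℝ}
    (hr : 0 ≤ r) (h : pathInf S x y ≤ ENNReal.ofReal r) : dpath S x y ≤ r := by
  have h1 : min (pathInf S x y) 1 ≤ ENNReal.ofReal r := le_trans (min_le_left _ _) h
  calc (min (pathInf S x y) 1).toReal ≤ (ENNReal.ofReal r).toReal :=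
        ENNReal.toReal_mono ENNReal.ofReal_ne_top h1
    _ = r := ENNReal.toReal_ofReal hr

lemma dpath_mono_of_pathInf_le {α : Type*} [EMetricSpace α] {S : Set α} {x y x' y' : α}
    (h : pathInf S x' y' ≤ pathInf S x y) : dpath S x' y' ≤ dpath S x y :=
  ENNReal.toReal_mono ((min_le_right _ _).trans_lt ENNReal.one_lt_top).ne
    (min_le_min h le_rfl)


lemma eVariationOn_id_Icc' : eVariationOn (id : ℝ → ℝ) (Set.Icc 0 1) ≤ 1 := by
  have h := MonotoneOn.eVariationOn_le (f := (id : ℝ → ℝ)) (s := Set.Icc 0 1)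
    (monotoneOn_id) (Set.left_mem_Icc.2 zero_le_one) (Set.right_mem_Icc.2 zero_le_one)
  rw [Set.inter_self] at h
  simpa using h

lemma key_B {n : ℕ} {t s : ℝ} (ht : t ∈ Set.Ioc (0:ℝ) 1) (hs : s ∈ Set.Ioc (0:ℝ) 1)
    {g : Fin n → OLine} (hg : g ∈ LinesEmb n) :
    dpath (LinesEmb n) (sigC t g) (sigC s g) ≤ |t - s| * Mfun g := by
  set γ : ℝ → (Fin n → OLine) := fun r => sigC (t + r * (s - t)) g with hγ
  have hr0 : (0:ℝ) ≤ |t - s| * Mfun g := mul_nonneg (abs_nonneg _) (Mfun_nonneg g)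
  refine dpath_le_of_pathInf_le hr0 ?_
  have hcont : ContinuousOn γ (Set.Icc 0 1) := by
    have : Continuous γ := sigC_continuous.comp
      ((continuous_const.add (continuous_id.mul continuous_const)).prodMk continuous_const)
    exact this.continuousOn
  have h0 : γ 0 = sigC t g := by simp [hγ]
  have h1 : γ 1 = sigC s g := by simp [hγ]
  have hmaps : Set.MapsTo γ (Set.Icc 0 1) (LinesEmb n) := by
    intro r hr
    refine sigC_mem_LinesEmb (ne_of_gt ?_) hg
    nlinarith [hr.1, hr.2, ht.1, hs.1, mul_nonneg hr.1 hs.1.le,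
      mul_nonneg (sub_nonneg.2 hr.2) ht.1.le]
  refine (pathInf_le γ hcont h0 h1 hmaps).trans ?_
  have hlip : LipschitzWith (|t - s| * Mfun g).toNNReal γ := by
    refine LipschitzWith.of_dist_le_mul fun r r' => ?_
    have h := sigC_dist_t (t + r * (s - t)) (t + r' * (s - t)) g
    have heq : |t + r * (s - t) - (t + r' * (s - t))| = |s - t| * |r - r'| := by
      rw [← abs_mul]; ring_nf
    rw [heq] at h
    refine h.trans ?_
    rw [Real.coe_toNNReal _ hr0, Real.dist_eq, abs_sub_comm t s]
    nlinarith [Mfun_nonneg g, abs_nonneg (r - r')]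
  have hcomp := (hlip.lipschitzOnWith (s := Set.univ)).comp_eVariationOn_le
    (Set.mapsTo_univ (id : ℝ → ℝ) (Set.Icc 0 1))
  have hγid : γ ∘ (id : ℝ → ℝ) = γ := rfl
  rw [hγid] at hcomp
  refine hcomp.trans ?_
  refine le_trans (mul_le_mul_right eVariationOn_id_Icc' _) ?_
  rw [mul_one, ENNReal.ofReal]

lemma key_A {n : ℕ} {t : ℝ} (ht : t ∈ Set.Ioc (0:ℝ) 1) (g g' : Fin n → OLine) :
    dpath (LinesEmb n) (sigC t g) (sigC t g') ≤ dpath (LinesEmb n) g g' := by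
  refine dpath_mono_of_pathInf_le ?_
  refine le_iInf fun γ => le_iInf fun hc => le_iInf fun h0 => le_iInf fun h1 =>
    le_iInf fun hmaps => ?_
  have hcontt : Continuous (sigC t (n := n)) :=
    sigC_continuous.comp (continuous_const.prodMk continuous_id)
  have habs : |t| ≤ 1 := by rw [abs_of_pos ht.1]; exact ht.2
  have hlip : LipschitzWith 1 (sigC t (n := n)) := by
    refine LipschitzWith.of_dist_le_mul fun a b => ?_
    rw [NNReal.coe_one, one_mul]; exact sigC_lip habs a b
  refine le_trans (pathInf_le (sigC t ∘ γ) (hcontt.comp_continuousOn hc)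
    (by rw [Function.comp_apply, h0]) (by rw [Function.comp_apply, h1])
    (fun r hr => sigC_mem_LinesEmb ht.1.ne' (hmaps hr))) ?_
  have := (hlip.lipschitzOnWith (s := Set.univ)).comp_eVariationOn_le
    (Set.mapsTo_univ γ (Set.Icc 0 1))
  simpa using this

/-- the subspace `Ê_n ⊆ Êmb(T_{Γ_n})` of virtual configurations of `n`
oriented lines all passing through the origin is a deformation retract of the completed
space `Êmb(T_{Γ_n})`; in particular the two spaces are homotopy equivalent.  Here `X` is an
abstract metric space identified via `e` with `(Emb(T_{Γ_n}), d_path)`, and `πh` is the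
continuous extension to the completion of the (uniformly continuous) inclusion into `ℒⁿ`. -/
theorem stmt15 (n : ℕ) (hn : 1 ≤ n)
    (X : Type) [MetricSpace X] (e : X → (Fin n → OLine))
    (hm : ModelsPathMetric (LinesEmb n) X e)
    (πh : UniformSpace.Completion X → (Fin n → OLine))
    (hπc : Continuous πh) (hπe : ∀ x : X, πh x = e x) :
    ∃ ρ : UniformSpace.Completion X → UniformSpace.Completion X,
      Continuous ρ ∧
      Set.range ρ ⊆ {z | ∀ i : Fin n, (πh z i).val.2 = 0} ∧
      (∀ z ∈ {z : UniformSpace.Completion X | ∀ i : Fin n, (πh z i).val.2 = 0}, ρ z = z) ∧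
      (∃ H : C(↥unitInterval × UniformSpace.Completion X, UniformSpace.Completion X),
        (∀ z : UniformSpace.Completion X, H (1, z) = z) ∧
        (∀ z : UniformSpace.Completion X, H (0, z) = ρ z)) ∧
      Nonempty (ContinuousMap.HomotopyEquiv (UniformSpace.Completion X)
        {z : UniformSpace.Completion X | ∀ i : Fin n, (πh z i).val.2 = 0}) := by
  classical
  have heS : ∀ a : X, e a ∈ LinesEmb n := fun a => hm.bij.mapsTo (Set.mem_univ a)
  -- the scaling maps on X, via the bijection e
  have hchoice : ∀ (t : ℝ) (a : X), ∃ b : X,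
      (t ∈ Set.Ioc (0:ℝ) 1 → e b = sigC t (e a)) := by
    intro t a
    by_cases ht : t ∈ Set.Ioc (0:ℝ) 1
    · obtain ⟨b, -, hb⟩ := hm.bij.surjOn (sigC_mem_LinesEmb (ne_of_gt ht.1) (heS a))
      exact ⟨b, fun _ => hb⟩
    · exact ⟨a, fun h => absurd h ht⟩
  choose Sf hSf using hchoice
  have hSf1 : ∀ a : X, Sf 1 a = a := by
    intro a
    have h1 : (1:ℝ) ∈ Set.Ioc (0:ℝ) 1 := ⟨zero_lt_one, le_rfl⟩
    have h := hSf 1 a h1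
    rw [sigC_one] at h
    exact hm.bij.injOn (Set.mem_univ _) (Set.mem_univ _) h
  -- the two key estimates at the level of X
  have hA' : ∀ {t : ℝ}, t ∈ Set.Ioc (0:ℝ) 1 → ∀ a b : X,
      dist (Sf t a) (Sf t b) ≤ dist a b := by
    intro t ht a b
    rw [hm.dist_eq, hm.dist_eq, hSf t a ht, hSf t b ht]
    exact key_A ht (e a) (e b)
  have hB' : ∀ {t s : ℝ}, t ∈ Set.Ioc (0:ℝ) 1 → s ∈ Set.Ioc (0:ℝ) 1 → ∀ a : X,
      dist (Sf t a) (Sf s a) ≤ |t - s| * Mfun (e a) := by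
    intro t s ht hs a
    rw [hm.dist_eq, hSf t a ht, hSf s a hs]
    exact key_B ht hs (heS a)
  have hucS : ∀ {t : ℝ}, t ∈ Set.Ioc (0:ℝ) 1 → UniformContinuous (Sf t) := by
    intro t ht
    exact (LipschitzWith.of_dist_le_mul (K := 1) (fun a b => by
      rw [NNReal.coe_one, one_mul]; exact hA' ht a b)).uniformContinuous
  -- lift the scalings to the completion
  set Sh : ℝ → UniformSpace.Completion X → UniformSpace.Completion X :=
    fun t => UniformSpace.Completion.map (Sf t) with hSh
  have hShc : ∀ t, Continuous (Sh t) := fun t => UniformSpace.Completion.continuous_map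
  have hShcoe : ∀ {t : ℝ}, t ∈ Set.Ioc (0:ℝ) 1 → ∀ a : X, Sh t a = (Sf t a : UniformSpace.Completion X) :=
    fun ht a => UniformSpace.Completion.map_coe (hucS ht) a
  have hA : ∀ {t : ℝ}, t ∈ Set.Ioc (0:ℝ) 1 → ∀ z w : UniformSpace.Completion X,
      dist (Sh t z) (Sh t w) ≤ dist z w := by
    intro t ht z w
    refine UniformSpace.Completion.induction_on₂
      (p := fun z w => dist (Sh t z) (Sh t w) ≤ dist z w) z w ?_ ?_
    · exact isClosed_le (((hShc t).comp continuous_fst).dist ((hShc t).comp continuous_snd))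
        (continuous_fst.dist continuous_snd)
    · intro a b
      rw [hShcoe ht a, hShcoe ht b, UniformSpace.Completion.dist_eq,
        UniformSpace.Completion.dist_eq]
      exact hA' ht a b
  have hB : ∀ {t s : ℝ}, t ∈ Set.Ioc (0:ℝ) 1 → s ∈ Set.Ioc (0:ℝ) 1 →
      ∀ z : UniformSpace.Completion X,
      dist (Sh t z) (Sh s z) ≤ |t - s| * Mfun (πh z) := by
    intro t s ht hs z
    refine UniformSpace.Completion.induction_on
      (p := fun z => dist (Sh t z) (Sh s z) ≤ |t - s| * Mfun (πh z)) z ?_ ?_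
    · exact isClosed_le ((hShc t).dist (hShc s))
        (continuous_const.mul (Mfun_continuous.comp hπc))
    · intro a
      rw [hShcoe ht a, hShcoe hs a, UniformSpace.Completion.dist_eq, hπe a]
      exact hB' ht hs a
  have hπS : ∀ {t : ℝ}, t ∈ Set.Ioc (0:ℝ) 1 → ∀ z : UniformSpace.Completion X,
      πh (Sh t z) = sigC t (πh z) := by
    intro t ht z
    refine UniformSpace.Completion.induction_on
      (p := fun z => πh (Sh t z) = sigC t (πh z)) z ?_ ?_
    · exact isClosed_eq (hπc.comp (hShc t))
        ((sigC_continuous.comp (continuous_const.prodMk continuous_id)).comp hπc)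
    · intro a
      rw [hShcoe ht a, hπe, hπe, hSf t a ht]
  -- the approximating sequence of scales
  set eps : ℕ → ℝ := fun k => 1 / (k + 1) with heps
  have heps_pos : ∀ k, 0 < eps k := fun k => by positivity
  have heps_le1 : ∀ k, eps k ≤ 1 := fun k => by
    rw [heps]
    rw [div_le_one (by positivity)]
    exact le_add_of_nonneg_left (Nat.cast_nonneg k)
  have heps_anti : ∀ {k m : ℕ}, k ≤ m → eps m ≤ eps k := by
    intro k m h
    apply one_div_le_one_div_of_le (by positivity)
    have : (k:ℝ) ≤ m := Nat.cast_le.2 h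
    linarith
  have heps0 : Tendsto eps atTop (𝓝 0) := tendsto_one_div_add_atTop_nhds_zero_nat
  set u : ℕ → ℝ → ℝ := fun k t => min 1 (max t (eps k)) with hu
  have hu_mem : ∀ k t, u k t ∈ Set.Ioc (0:ℝ) 1 := fun k t =>
    ⟨lt_min one_pos (lt_max_iff.2 (Or.inr (heps_pos k))), min_le_left _ _⟩
  have hu_lipt : ∀ k t s, |u k t - u k s| ≤ |t - s| := by
    intro k t s
    refine (abs_min_sub_min_le_max 1 (max t (eps k)) 1 (max s (eps k))).trans ?_
    refine max_le (by rw [sub_self, abs_zero]; exact abs_nonneg _) ?_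
    exact abs_max_sub_max_le_abs t s (eps k)
  have hu_lipk : ∀ t k m, |u k t - u m t| ≤ |eps k - eps m| := by
    intro t k m
    refine (abs_min_sub_min_le_max 1 (max t (eps k)) 1 (max t (eps m))).trans ?_
    refine max_le (by rw [sub_self, abs_zero]; exact abs_nonneg _) ?_
    rw [max_comm t (eps k), max_comm t (eps m)]
    exact abs_max_sub_max_le_abs (eps k) (eps m) t
  have hMnn : ∀ z : UniformSpace.Completion X, 0 ≤ Mfun (πh z) := fun z => Mfun_nonneg _
  -- the limiting maps
  have hex : ∀ (t : ℝ) (z : UniformSpace.Completion X),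
      ∃ y : UniformSpace.Completion X, Tendsto (fun k => Sh (u k t) z) atTop (𝓝 y) := by
    intro t z
    refine cauchySeq_tendsto_of_complete ?_
    refine cauchySeq_of_le_tendsto_0 (fun N => eps N * Mfun (πh z)) ?_ ?_
    · intro k m N hk hm2
      refine (hB (hu_mem k t) (hu_mem m t) z).trans ?_
      refine mul_le_mul_of_nonneg_right ((hu_lipk t k m).trans ?_) (hMnn z)
      rcases le_total (eps k) (eps m) with h | h
      · rw [abs_of_nonpos (sub_nonpos.2 h), neg_sub]
        have h1 := heps_anti hm2
        have h2 := heps_pos k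
        linarith
      · rw [abs_of_nonneg (sub_nonneg.2 h)]
        have h1 := heps_anti hk
        have h2 := heps_pos m
        linarith
    · simpa [heps, one_div] using heps0.mul_const (Mfun (πh z))
  choose G hG using hex
  -- estimates for G
  have hG1 : ∀ (t s : ℝ) (z : UniformSpace.Completion X),
      dist (G t z) (G s z) ≤ |t - s| * Mfun (πh z) := by
    intro t s z
    refine le_of_tendsto ((hG t z).dist (hG s z)) (Filter.Eventually.of_forall fun k => ?_)
    exact (hB (hu_mem k t) (hu_mem k s) z).trans
      (mul_le_mul_of_nonneg_right (hu_lipt k t s) (hMnn z))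
  have hG2 : ∀ (t : ℝ) (z w : UniformSpace.Completion X),
      dist (G t z) (G t w) ≤ dist z w := by
    intro t z w
    exact le_of_tendsto ((hG t z).dist (hG t w))
      (Filter.Eventually.of_forall fun k => hA (hu_mem k t) z w)
  have hGone : ∀ z, G 1 z = z := by
    intro z
    have hu1 : ∀ k, u k 1 = 1 := fun k => by
      rw [hu]; simp only [max_eq_left (heps_le1 k), min_self]
    have hSh1 : Sh 1 = id := by
      have h : Sf 1 = id := funext hSf1
      rw [hSh]
      show UniformSpace.Completion.map (Sf 1) = id
      rw [h, UniformSpace.Completion.map_id]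
    have hconst : Tendsto (fun k => Sh (u k 1) z) atTop (𝓝 z) := by
      have : (fun k => Sh (u k 1) z) = fun _ => z := by
        funext k; rw [hu1 k, hSh1]; rfl
      rw [this]; exact tendsto_const_nhds
    exact tendsto_nhds_unique (hG 1 z) hconst
  have hu0 : ∀ k, u k 0 = eps k := fun k => by
    rw [hu]
    simp only [max_eq_right (heps_pos k).le, min_eq_right (heps_le1 k)]
  have hπG0 : ∀ z, πh (G 0 z) = sigC 0 (πh z) := by
    intro z
    have h1 : Tendsto (fun k => πh (Sh (u k 0) z)) atTop (𝓝 (πh (G 0 z))) :=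
      (hπc.tendsto _).comp (hG 0 z)
    have h2 : Tendsto (fun k => πh (Sh (u k 0) z)) atTop (𝓝 (sigC 0 (πh z))) := by
      have heq : (fun k => πh (Sh (u k 0) z)) = fun k => sigC (eps k) (πh z) := by
        funext k
        rw [← hu0 k]
        exact hπS (hu_mem k 0) z
      rw [heq]
      have hc : Tendsto (fun k => ((eps k : ℝ), πh z)) atTop (𝓝 ((0:ℝ), πh z)) :=
        heps0.prodMk_nhds tendsto_const_nhds
      exact (sigC_continuous.tendsto ((0:ℝ), πh z)).comp hc
    exact tendsto_nhds_unique h1 h2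
  have hrange : ∀ (z : UniformSpace.Completion X) (i : Fin n), (πh (G 0 z) i).val.2 = 0 := by
    intro z i
    rw [hπG0 z]
    show (0:ℝ) • (πh z i).val.2 = 0
    exact zero_smul ℝ _
  have hfix : ∀ z : UniformSpace.Completion X,
      (∀ i : Fin n, (πh z i).val.2 = 0) → G 0 z = z := by
    intro z hz
    have hM : Mfun (πh z) = 0 := Finset.sum_eq_zero fun i _ => by rw [hz i, norm_zero]
    have h := hG1 0 1 z
    rw [hGone z, hM, mul_zero] at h
    exact dist_le_zero.1 h
  -- joint continuity
  have hMc : Continuous (fun z : UniformSpace.Completion X => Mfun (πh z)) :=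
    Mfun_continuous.comp hπc
  have hHcont : Continuous
      (fun p : unitInterval × UniformSpace.Completion X => G (p.1 : ℝ) p.2) := by
    rw [Metric.continuous_iff]
    rintro ⟨t₀, z₀⟩ ε hε
    set M₀ : ℝ := Mfun (πh z₀) + 1 with hM₀def
    have hM₀ : 0 < M₀ := by have := hMnn z₀; linarith
    obtain ⟨δ₁, hδ₁pos, hδ₁⟩ := Metric.continuousAt_iff.1 (hMc.continuousAt (x := z₀)) 1 one_pos
    refine ⟨min δ₁ (min (ε/2) (ε / (2 * M₀))), by positivity, ?_⟩
    rintro ⟨t, z⟩ hdist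
    have hdt : dist t t₀ < min δ₁ (min (ε/2) (ε / (2 * M₀))) :=
      lt_of_le_of_lt (by rw [Prod.dist_eq]; exact le_max_left _ _) hdist
    have hdz : dist z z₀ < min δ₁ (min (ε/2) (ε / (2 * M₀))) :=
      lt_of_le_of_lt (by rw [Prod.dist_eq]; exact le_max_right _ _) hdist
    have hMz : Mfun (πh z) ≤ M₀ := by
      have := hδ₁ (lt_of_lt_of_le hdz (min_le_left _ _))
      rw [Real.dist_eq] at this
      have := abs_lt.1 this
      linarith [this.2]
    have habs : |((t : ℝ)) - ((t₀ : ℝ))| < ε / (2 * M₀) := by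
      have : dist t t₀ = |((t : ℝ)) - ((t₀ : ℝ))| := by
        rw [Subtype.dist_eq, Real.dist_eq]
      rw [this] at hdt
      exact lt_of_lt_of_le hdt ((min_le_right _ _).trans (min_le_right _ _))
    have hzz : dist z z₀ < ε / 2 :=
      lt_of_lt_of_le hdz ((min_le_right _ _).trans (min_le_left _ _))
    calc dist (G ((t:ℝ)) z) (G ((t₀:ℝ)) z₀)
        ≤ dist (G ((t:ℝ)) z) (G ((t₀:ℝ)) z) + dist (G ((t₀:ℝ)) z) (G ((t₀:ℝ)) z₀) :=
          dist_triangle _ _ _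
      _ ≤ |((t:ℝ)) - ((t₀:ℝ))| * Mfun (πh z) + dist z z₀ :=
          add_le_add (hG1 _ _ z) (hG2 _ z z₀)
      _ < ε / 2 + ε / 2 := by
          refine add_lt_add_of_le_of_lt ?_ hzz
          calc |((t:ℝ)) - ((t₀:ℝ))| * Mfun (πh z) ≤ |((t:ℝ)) - ((t₀:ℝ))| * M₀ :=
                mul_le_mul_of_nonneg_left hMz (abs_nonneg _)
            _ ≤ (ε / (2 * M₀)) * M₀ := mul_le_mul_of_nonneg_right habs.le hM₀.le
            _ = ε / 2 := by field_simp
      _ = ε := by ring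
  -- assemble everything
  set ρ : UniformSpace.Completion X → UniformSpace.Completion X := G 0 with hρ
  have hρcont : Continuous ρ := by
    have h := hHcont.comp
      ((continuous_const (y := (0 : unitInterval))).prodMk
        (continuous_id : Continuous (fun z : UniformSpace.Completion X => z)))
    have heq : ((0 : unitInterval) : ℝ) = 0 := rfl
    exact h
  refine ⟨ρ, hρcont, ?_, ?_, ?_, ?_⟩
  · rintro y ⟨z, rfl⟩
    exact hrange z
  · intro z hz
    exact hfix z hz
  · refine ⟨⟨fun p => G (p.1 : ℝ) p.2, hHcont⟩, fun z => ?_, fun z => ?_⟩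
    · exact hGone z
    · rfl
  · set E : Set (UniformSpace.Completion X) :=
      {z | ∀ i : Fin n, (πh z i).val.2 = 0} with hE
    have hmem : ∀ z : UniformSpace.Completion X, ρ z ∈ E := fun z => hrange z
    set f : C(UniformSpace.Completion X, ↥E) :=
      ⟨fun z => ⟨ρ z, hmem z⟩, hρcont.subtype_mk _⟩ with hf
    set g : C(↥E, UniformSpace.Completion X) := ⟨Subtype.val, continuous_subtype_val⟩ with hg
    refine ⟨⟨f, g, ?_, ?_⟩⟩
    · -- (g.comp f).Homotopic id
      refine ⟨⟨⟨fun p => G (p.1 : ℝ) p.2, hHcont⟩, fun z => rfl, fun z => hGone z⟩⟩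
    · -- (f.comp g).Homotopic id
      have h : f.comp g = ContinuousMap.id ↥E := by
        refine ContinuousMap.ext fun y => Subtype.ext ?_
        exact hfix y.1 y.2
      rw [h]

end
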